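/- Let σ: ℝ → ℝ be a function that is linear on an open interval (a−δ, a+δ) with slope 0, i.e., σ(t) = β for all t ∈ (a−δ, a+δ). Consider a fully-connected network with H hidden layers, widths d₀, d₁, ..., d_{H+1}, input data X ∈ ℝ^{d₀×N}, output data Y ∈ ℝ^{d_{H+1}×N}, and loss E(Θ) = ‖Y − W_{H+1}σ(W_H σ(⋯σ(W₁X + b₁1ᵀ)⋯) + b_H 1ᵀ)‖_F². Suppose rank([Xᵀ, 1_N, Yᵀ]) > rank([Xᵀ, 1_N]). Define Θ by W_h = 0, b_h = a·1 for h = 1,...,H, and W_{H+1} ∈ argmin_V ‖Y − β·V·1_{d_H×N}‖_F². Then Θ is a local minimum of E with E(Θ) > 0. -/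
import Mathlib


/-- Outputs of the hidden layers of a fully connected network:
`hiddenOut σ d N X W b h` is the output matrix of the h-th layer (layer 0 is
the input X). -/
noncomputable def hiddenOut (σ : ℝ → ℝ) (d : ℕ → ℕ) (N : ℕ)
    (X : Matrix (Fin (d 0)) (Fin N) ℝ)
    (W : (h : ℕ) → Matrix (Fin (d (h + 1))) (Fin (d h)) ℝ)
    (b : (h : ℕ) → Fin (d (h + 1)) → ℝ) :
    (h : ℕ) → Matrix (Fin (d h)) (Fin N) ℝ
  | 0 => X
  | h + 1 => Matrix.of fun i n =>
      σ ((∑ j, W h i j * hiddenOut σ d N X W b h j n) + b h i)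

/-- For an activation that is constant (= β) on an interval around a, and data
with rank([Xᵀ,1,Yᵀ]) > rank([Xᵀ,1]), the configuration with zero hidden
weights, biases a, and an optimal output layer is a local minimum of the
quadratic loss with positive loss value. -/
theorem constant_piece_bad_local_min
    (H N dout : ℕ) (hH : 0 < H) (d : ℕ → ℕ)
    (σ : ℝ → ℝ) (a δ β : ℝ) (hδ : 0 < δ)
    (hσ : ∀ t ∈ Set.Ioo (a - δ) (a + δ), σ t = β)
    (X : Matrix (Fin (d 0)) (Fin N) ℝ) (Y : Matrix (Fin dout) (Fin N) ℝ)
    (hrank : (Matrix.of fun (n : Fin N) =>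
        (Sum.elim (fun i : Fin (d 0) => X i n) (fun _ : Unit => (1 : ℝ)) :
          Fin (d 0) ⊕ Unit → ℝ)).rank <
      (Matrix.of fun (n : Fin N) =>
        (Sum.elim (Sum.elim (fun i : Fin (d 0) => X i n)
            (fun _ : Unit => (1 : ℝ))) (fun k : Fin dout => Y k n) :
          (Fin (d 0) ⊕ Unit) ⊕ Fin dout → ℝ)).rank)
    (Wout : Matrix (Fin dout) (Fin (d H)) ℝ)
    (hWout : ∀ V : Matrix (Fin dout) (Fin (d H)) ℝ,
      ∑ k, ∑ n, (Y k n - β * ∑ j, Wout k j) ^ 2 ≤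
      ∑ k, ∑ n, (Y k n - β * ∑ j, V k j) ^ 2) :
    IsLocalMin
      (fun Θ : ((h : ℕ) → Matrix (Fin (d (h + 1))) (Fin (d h)) ℝ) ×
          ((h : ℕ) → Fin (d (h + 1)) → ℝ) ×
          Matrix (Fin dout) (Fin (d H)) ℝ =>
        ∑ k, ∑ n, (Y k n -
          ∑ j, Θ.2.2 k j * hiddenOut σ d N X Θ.1 Θ.2.1 H j n) ^ 2)
      (fun _ => 0, fun _ _ => a, Wout) ∧
    0 < ∑ k, ∑ n, (Y k n -
      ∑ j, Wout k j *
        hiddenOut σ d N X (fun _ => 0) (fun _ _ => a) H j n) ^ 2 := by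
  obtain ⟨m, rfl⟩ : ∃ m, H = m + 1 := ⟨H - 1, (Nat.succ_pred_eq_of_pos hH).symm⟩
  have ha : a ∈ Set.Ioo (a - δ) (a + δ) := ⟨by linarith, by linarith⟩
  set p₀ : ((h : ℕ) → Matrix (Fin (d (h + 1))) (Fin (d h)) ℝ) ×
      ((h : ℕ) → Fin (d (h + 1)) → ℝ) × Matrix (Fin dout) (Fin (d (m + 1))) ℝ :=
    (fun _ => 0, fun _ _ => a, Wout) with hp₀
  -- hidden outputs at the base point are all β
  have hbase : ∀ h (j : Fin (d (h + 1))) (n : Fin N),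
      hiddenOut σ d N X (fun _ => 0) (fun _ _ => a) (h + 1) j n = β := by
    intro h j n
    simp only [hiddenOut, Matrix.of_apply, Matrix.zero_apply, zero_mul,
      Finset.sum_const_zero, zero_add]
    exact hσ a ha
  -- eventually, all hidden outputs are β
  have key : ∀ h : ℕ, ∀ᶠ Θ in nhds p₀, ∀ (j : Fin (d (h + 1))) (n : Fin N),
      hiddenOut σ d N X Θ.1 Θ.2.1 (h + 1) j n = β := by
    intro h
    induction h with
    | zero =>
      rw [Filter.eventually_all]; intro i
      rw [Filter.eventually_all]; intro n
      have hc : Continuous (fun Θ : ((h : ℕ) → Matrix (Fin (d (h + 1))) (Fin (d h)) ℝ) ×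
          ((h : ℕ) → Fin (d (h + 1)) → ℝ) × Matrix (Fin dout) (Fin (d (m + 1))) ℝ =>
          (∑ j, Θ.1 0 i j * X j n) + Θ.2.1 0 i) := by fun_prop
      have h0 : ((∑ j, p₀.1 0 i j * X j n) + p₀.2.1 0 i) = a := by
        simp [hp₀]
      have := hc.continuousAt.eventually_mem (x := p₀)
        (isOpen_Ioo.mem_nhds (by rw [h0]; exact ha))
      refine this.mono fun Θ hΘ => ?_
      simp only [hiddenOut, Matrix.of_apply]
      exact hσ _ hΘ
    | succ h ih =>
      have hall : ∀ᶠ Θ in nhds p₀, ∀ (i : Fin (d (h + 1 + 1))) (n : Fin N),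
          ((∑ j, Θ.1 (h + 1) i j * β) + Θ.2.1 (h + 1) i) ∈ Set.Ioo (a - δ) (a + δ) := by
        rw [Filter.eventually_all]; intro i
        rw [Filter.eventually_all]; intro n
        have hc : Continuous (fun Θ : ((h : ℕ) → Matrix (Fin (d (h + 1))) (Fin (d h)) ℝ) ×
            ((h : ℕ) → Fin (d (h + 1)) → ℝ) × Matrix (Fin dout) (Fin (d (m + 1))) ℝ =>
            (∑ j, Θ.1 (h + 1) i j * β) + Θ.2.1 (h + 1) i) := by fun_prop
        have h0 : ((∑ j, p₀.1 (h + 1) i j * β) + p₀.2.1 (h + 1) i) = a := by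
          simp [hp₀]
        exact hc.continuousAt.eventually_mem (x := p₀)
          (isOpen_Ioo.mem_nhds (by rw [h0]; exact ha))
      refine (ih.and hall).mono fun Θ ⟨h1, h2⟩ i n => ?_
      show σ ((∑ j, Θ.1 (h + 1) i j * hiddenOut σ d N X Θ.1 Θ.2.1 (h + 1) j n)
        + Θ.2.1 (h + 1) i) = β
      rw [Finset.sum_congr rfl fun j _ => by rw [h1 j n]]
      exact hσ _ (h2 i n)
  -- value rewriting
  have hval : ∀ (V : Matrix (Fin dout) (Fin (d (m + 1))) ℝ)
      (out : Fin (d (m + 1)) → Fin N → ℝ), (∀ j n, out j n = β) →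
      ∀ k n, (Y k n - ∑ j, V k j * out j n) = (Y k n - β * ∑ j, V k j) := by
    intro V out hout k n
    rw [Finset.sum_congr rfl fun j _ => by rw [hout j n], Finset.mul_sum]
    congr 1
    exact Finset.sum_congr rfl fun j _ => mul_comm _ _
  have hfp₀ : ∑ k, ∑ n, (Y k n -
      ∑ j, Wout k j * hiddenOut σ d N X (fun _ => 0) (fun _ _ => a) (m + 1) j n) ^ 2
      = ∑ k, ∑ n, (Y k n - β * ∑ j, Wout k j) ^ 2 := by
    refine Finset.sum_congr rfl fun k _ => Finset.sum_congr rfl fun n _ => ?_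
    rw [hval Wout _ (hbase m) k n]
  constructor
  · refine (key m).mono fun Θ hΘ => ?_
    simp only
    rw [hfp₀]
    calc ∑ k, ∑ n, (Y k n - β * ∑ j, Wout k j) ^ 2
        ≤ ∑ k, ∑ n, (Y k n - β * ∑ j, Θ.2.2 k j) ^ 2 := hWout Θ.2.2
      _ = ∑ k, ∑ n, (Y k n - ∑ j, Θ.2.2 k j * hiddenOut σ d N X Θ.1 Θ.2.1 (m + 1) j n) ^ 2 := by
          refine Finset.sum_congr rfl fun k _ => Finset.sum_congr rfl fun n _ => ?_
          rw [hval Θ.2.2 _ (fun j n => hΘ j n) k n]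
  · rw [hfp₀]
    rcases (Finset.sum_nonneg fun k _ => Finset.sum_nonneg fun n _ =>
      sq_nonneg (Y k n - β * ∑ j, Wout k j)).lt_or_eq with h | h
    · exact h
    exfalso
    have hY : ∀ k n, Y k n = β * ∑ j, Wout k j := by
      intro k n
      have h1 := (Finset.sum_eq_zero_iff_of_nonneg
        (fun k _ => Finset.sum_nonneg fun n _ =>
          sq_nonneg (Y k n - β * ∑ j, Wout k j))).mp h.symm k (Finset.mem_univ k)
      have h2 := (Finset.sum_eq_zero_iff_of_nonneg
        (fun n _ => sq_nonneg (Y k n - β * ∑ j, Wout k j))).mp h1 n (Finset.mem_univ n)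
      have := pow_eq_zero_iff (n := 2) (by norm_num) |>.mp h2
      linarith [this]
    set c : Fin dout → ℝ := fun k => β * ∑ j, Wout k j with hc
    set M1 : Matrix (Fin N) (Fin (d 0) ⊕ Unit) ℝ :=
      Matrix.of fun (n : Fin N) =>
        (Sum.elim (fun i : Fin (d 0) => X i n) (fun _ : Unit => (1 : ℝ)) :
          Fin (d 0) ⊕ Unit → ℝ) with hM1
    set B : Matrix (Fin (d 0) ⊕ Unit) ((Fin (d 0) ⊕ Unit) ⊕ Fin dout) ℝ :=
      Matrix.of fun p => Sum.elim (fun q => if p = q then (1 : ℝ) else 0)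
        (fun k => if p = Sum.inr () then c k else 0) with hB
    have hM2 : (Matrix.of fun (n : Fin N) =>
        (Sum.elim (Sum.elim (fun i : Fin (d 0) => X i n)
            (fun _ : Unit => (1 : ℝ))) (fun k : Fin dout => Y k n) :
          (Fin (d 0) ⊕ Unit) ⊕ Fin dout → ℝ)) = M1 * B := by
      ext n col
      rcases col with q | k
      · simp [Matrix.mul_apply, hB, hM1, mul_ite, mul_one, mul_zero,
          Finset.sum_ite_eq, Finset.sum_ite_eq']
      · simp [Matrix.mul_apply, hB, hM1, hY k n, mul_ite, mul_zero,
          Finset.sum_ite_eq, Finset.sum_ite_eq', hc]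
    rw [hM2] at hrank
    exact absurd (Matrix.rank_mul_le_left M1 B) (not_le.mpr hrank)
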